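/- Every square matrix A over a field F is similar over F to its transpose Aᵀ; that is, there exists an invertible matrix P over F with P⁻¹AP = Aᵀ. -/

import Mathlib

open Polynomial Module
open scoped DirectSum
universe u
variable {F : Type u} [Field F]


noncomputable def Bq {g : F[X]} (hg : g.Monic) :
    AdjoinRoot g →ₗ[F] AdjoinRoot g →ₗ[F] F :=
  LinearMap.mk₂ F
    (fun u v => (AdjoinRoot.modByMonicHom hg (u * v)).coeff (g.natDegree - 1))
    (fun u u' v => by simp only [add_mul, map_add, coeff_add])
    (fun c u v => by simp only [smul_mul_assoc, map_smul, coeff_smul, smul_eq_mul])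
    (fun u v v' => by simp only [mul_add, map_add, coeff_add])
    (fun c u v => by simp only [mul_smul_comm, map_smul, coeff_smul, smul_eq_mul])

lemma Bq_apply {g : F[X]} (hg : g.Monic) (u v : AdjoinRoot g) :
    Bq hg u v = (AdjoinRoot.modByMonicHom hg (u * v)).coeff (g.natDegree - 1) := rfl

lemma Bq_assoc {g : F[X]} (hg : g.Monic) (r : F[X]) (u v : AdjoinRoot g) :
    Bq hg (AdjoinRoot.mk g r * u) v = Bq hg u (AdjoinRoot.mk g r * v) := by
  rw [Bq_apply, Bq_apply, mul_comm (AdjoinRoot.mk g r) u, mul_assoc]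

lemma Bq_separating {g : F[X]} (hg : g.Monic) (u : AdjoinRoot g) (hu : u ≠ 0) :
    ∃ v, Bq hg u v ≠ 0 := by
  set a := AdjoinRoot.modByMonicHom hg u with ha
  have hmk : AdjoinRoot.mk g a = u := AdjoinRoot.mk_leftInverse hg u
  have ha0 : a ≠ 0 := by
    intro h; apply hu; rw [← hmk, h, map_zero]
  have hdeg : a.degree < g.degree := by
    obtain ⟨f, rfl⟩ := AdjoinRoot.mk_surjective (g := g) u
    rw [ha, AdjoinRoot.modByMonicHom_mk]
    exact degree_modByMonic_lt f hg
  have hk : a.natDegree < g.natDegree := natDegree_lt_natDegree ha0 hdeg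
  set d := g.natDegree
  set k := a.natDegree
  obtain ⟨m, hm⟩ : ∃ m, d - 1 - k = m := ⟨_, rfl⟩
  refine ⟨AdjoinRoot.mk g (X ^ m), ?_⟩
  have hprod : u * AdjoinRoot.mk g (X ^ (m)) = AdjoinRoot.mk g (a * X ^ (m)) := by
    rw [← hmk, ← map_mul]
  have hdeg2 : (a * X ^ (m)).degree < g.degree := by
    have h1 : (a * X ^ (m)).natDegree = k + (m) := by
      rw [natDegree_mul ha0 (pow_ne_zero _ X_ne_zero), natDegree_X_pow]
    have h3 : (a * X ^ (m)) ≠ 0 := mul_ne_zero ha0 (pow_ne_zero _ X_ne_zero)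
    rw [degree_eq_natDegree h3, degree_eq_natDegree hg.ne_zero, h1]
    exact_mod_cast by omega
  have key : Bq hg u (AdjoinRoot.mk g (X ^ (m))) = a.leadingCoeff := by
    rw [Bq_apply, hprod, AdjoinRoot.modByMonicHom_mk, (modByMonic_eq_self_iff hg).mpr hdeg2]
    have h4 : d - 1 = k + m := by omega
    have h5 := coeff_mul_X_pow a (m) k
    rw [h4, h5]
    rfl
  rw [key]
  exact leadingCoeff_ne_zero.mpr ha0

lemma span_eq_span_monic (q : F[X]) (hq : q ≠ 0) :
    Submodule.span F[X] {q} = Ideal.span {q * C q.leadingCoeff⁻¹} := by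
  have hu : IsUnit (C q.leadingCoeff⁻¹) :=
    isUnit_C.mpr (isUnit_iff_ne_zero.mpr (inv_ne_zero (leadingCoeff_ne_zero.mpr hq)))
  show (Ideal.span {q} : Ideal F[X]) = _
  exact Ideal.span_singleton_eq_span_singleton.mpr (associated_mul_unit_left q _ hu).symm
example (g r : F[X]) : AdjoinRoot.mk g r = Ideal.Quotient.mk (Ideal.span {g}) r := rfl
lemma smul_quot_eq_mk_mul (g r : F[X]) (w : F[X] ⧸ Ideal.span {g}) :
    r • w = Ideal.Quotient.mk (Ideal.span {g}) r * w := by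
  induction w using Quotient.ind
  rfl

section DirectSumPairing
variable {ι : Type u} [Fintype ι] [DecidableEq ι] {N : ι → Type u}
  [∀ i, AddCommGroup (N i)] [∀ i, Module F (N i)]

noncomputable def BtotD (B : ∀ i, N i →ₗ[F] N i →ₗ[F] F) :
    (⨁ i, N i) →ₗ[F] (⨁ i, N i) →ₗ[F] F :=
  LinearMap.mk₂ F (fun x y => ∑ i, B i (x i) (y i))
    (fun x x' y => by simp only [DirectSum.add_apply, map_add, LinearMap.add_apply,
      Finset.sum_add_distrib])
    (fun c x y => by
      rw [Finset.smul_sum]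
      refine Finset.sum_congr rfl fun i _ => ?_
      rw [DFinsupp.smul_apply, map_smul, LinearMap.smul_apply])
    (fun x y y' => by simp only [DirectSum.add_apply, map_add, LinearMap.add_apply,
      Finset.sum_add_distrib])
    (fun c x y => by
      rw [Finset.smul_sum]
      refine Finset.sum_congr rfl fun i _ => ?_
      rw [DFinsupp.smul_apply, map_smul])

lemma BtotD_apply (B : ∀ i, N i →ₗ[F] N i →ₗ[F] F) (x y : ⨁ i, N i) :
    BtotD B x y = ∑ i, B i (x i) (y i) := rfl

lemma BtotD_sep (B : ∀ i, N i →ₗ[F] N i →ₗ[F] F)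
    (hsep : ∀ (i) (x : N i), (∀ y, B i x y = 0) → x = 0)
    (x : ⨁ i, N i) (hx : ∀ y, BtotD B x y = 0) : x = 0 := by
  refine DFinsupp.ext fun j => ?_
  refine hsep j (x j) fun v => ?_
  have h := hx (DirectSum.of _ j v)
  rw [BtotD_apply, Finset.sum_eq_single j] at h
  · rwa [DirectSum.of_eq_same] at h
  · intro i _ hij
    rw [DirectSum.of_eq_of_ne _ _ _ hij, map_zero]
  · intro h'; exact absurd (Finset.mem_univ j) h'

end DirectSumPairing


theorem exists_pairing {V : Type u} [AddCommGroup V] [Module F V]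
    [FiniteDimensional F V] (f : V →ₗ[F] V) :
    ∃ B : V →ₗ[F] V →ₗ[F] F,
      (∀ x y, B (f x) y = B x (f y)) ∧ ∀ x, (∀ y, B x y = 0) → x = 0 := by
  classical
  have htor : Module.IsTorsion F[X] (Module.AEval' f) := by
    intro x
    refine ⟨⟨f.charpoly, mem_nonZeroDivisors_of_ne_zero f.charpoly_monic.ne_zero⟩, ?_⟩
    apply (Module.AEval.of F V f).symm.injective
    rw [Submonoid.smul_def, Module.AEval.of_symm_smul, LinearMap.aeval_self_charpoly]
    simp
  obtain ⟨ι, hfin, p, hp, e, ⟨ψ⟩⟩ := Module.equiv_directSum_of_isTorsion htor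
  -- monic generators
  set q : ι → F[X] := fun i => p i ^ e i with hqdef
  have hq0 : ∀ i, q i ≠ 0 := fun i => pow_ne_zero _ (hp i).ne_zero
  set m : ι → F[X] := fun i => q i * C (q i).leadingCoeff⁻¹ with hmdef
  have hm : ∀ i, (m i).Monic := fun i => monic_mul_leadingCoeff_inv (hq0 i)
  -- equivs from the structure-theorem summands to the monic quotients
  set E : ∀ i, (F[X] ⧸ Submodule.span F[X] {q i}) ≃ₗ[F[X]] (F[X] ⧸ Ideal.span {m i}) :=
    fun i => Submodule.quotEquivOfEq _ _ (span_eq_span_monic (q i) (hq0 i)) with hEdef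
  -- the bilinear form on each summand
  set Bi : ∀ i, (F[X] ⧸ Submodule.span F[X] {q i}) →ₗ[F] (F[X] ⧸ Submodule.span F[X] {q i}) →ₗ[F] F :=
    fun i => (Bq (hm i)).compl₁₂ ((E i).restrictScalars F).toLinearMap ((E i).restrictScalars F).toLinearMap with hBidef
  have Bi_apply : ∀ i x y, Bi i x y = Bq (hm i) (E i x) (E i y) := fun i x y => rfl
  have Bi_assoc : ∀ (i) (r : F[X]) (x y), Bi i (r • x) y = Bi i x (r • y) := by
    intro i r x y
    rw [Bi_apply, Bi_apply]
    have h1 : (E i) (r • x) = r • ((E i) x) := (E i).map_smul r x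
    have h2 : (E i) (r • y) = r • ((E i) y) := (E i).map_smul r y
    rw [h1, h2, smul_quot_eq_mk_mul (m i), smul_quot_eq_mk_mul (m i)]
    exact Bq_assoc (hm i) r _ _
  have Bi_sep : ∀ (i) (x), (∀ y, Bi i x y = 0) → x = 0 := by
    intro i x hx
    by_contra h0
    obtain ⟨v, hv⟩ := Bq_separating (hm i) (E i x) (fun h => h0 ((E i).map_eq_zero_iff.mp h))
    exact hv (by rw [← (E i).apply_symm_apply v] at hv ⊢; rw [← Bi_apply]; exact hx _)
  -- the bilinear form on the direct sum
  have Btot_assoc : ∀ (r : F[X]) (x y : ⨁ i, (F[X] ⧸ Submodule.span F[X] {q i})),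
      BtotD Bi (r • x) y = BtotD Bi x (r • y) := by
    intro r x y
    rw [BtotD_apply, BtotD_apply]
    refine Finset.sum_congr rfl fun i _ => ?_
    rw [DFinsupp.smul_apply, DFinsupp.smul_apply]
    exact Bi_assoc i r _ _
  -- transport to V
  set T : V ≃ₗ[F] (⨁ i, (F[X] ⧸ Submodule.span F[X] {q i})) := (Module.AEval.of F V f).trans (ψ.restrictScalars F) with hTdef
  have hT : ∀ x : V, T (f x) = (X : F[X]) • T x := by
    intro x
    have h1 : Module.AEval.of F V f (f x) = (X : F[X]) • Module.AEval.of F V f x :=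
      (Module.AEval.X_smul_of f x).symm
    rw [hTdef]
    simp only [LinearEquiv.trans_apply, h1, LinearEquiv.restrictScalars_apply, map_smul]
  refine ⟨(BtotD Bi).compl₁₂ T.toLinearMap T.toLinearMap, ?_, ?_⟩
  · intro x y
    simp only [LinearMap.compl₁₂_apply, LinearEquiv.coe_coe, hT]
    exact Btot_assoc X (T x) (T y)
  · intro x hx
    apply T.map_eq_zero_iff.mp
    refine BtotD_sep Bi Bi_sep (T x) fun y => ?_
    have := hx (T.symm y)
    simpa only [LinearMap.compl₁₂_apply, LinearEquiv.coe_coe, LinearEquiv.apply_symm_apply]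
      using this
theorem matrix_similar_to_transpose (F : Type*) [Field F] (n : ℕ)
    (A : Matrix (Fin n) (Fin n) F) :
    ∃ P : Matrix (Fin n) (Fin n) F, IsUnit P ∧ P⁻¹ * A * P = A.transpose := by
  classical
  obtain ⟨B, hassoc, hsep⟩ := exists_pairing A.mulVecLin
  have hinj : Function.Injective (B : (Fin n → F) →ₗ[F] Module.Dual F (Fin n → F)) := by
    rw [← LinearMap.ker_eq_bot, LinearMap.ker_eq_bot']
    intro x hx
    exact hsep x fun y => by rw [hx]; rfl
  have hsurj : Function.Surjective (B : (Fin n → F) →ₗ[F] Module.Dual F (Fin n → F)) :=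
    (LinearMap.injective_iff_surjective_of_finrank_eq_finrank
      (Subspace.dual_finrank_eq).symm).mp hinj
  let e : (Fin n → F) ≃ₗ[F] Module.Dual F (Fin n → F) :=
    LinearEquiv.ofBijective B ⟨hinj, hsurj⟩
  let b := Pi.basisFun F (Fin n)
  have hcomm : B ∘ₗ A.mulVecLin = (A.mulVecLin).dualMap ∘ₗ B := by
    apply LinearMap.ext; intro x
    apply LinearMap.ext; intro y
    exact hassoc x y
  set P := LinearMap.toMatrix b b.dualBasis B with hP
  have hPunit : IsUnit P := by
    refine isUnit_iff_exists.mpr ⟨LinearMap.toMatrix b.dualBasis b e.symm.toLinearMap, ?_, ?_⟩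
    · rw [hP, ← LinearMap.toMatrix_comp b.dualBasis b b.dualBasis]
      have h2 : B ∘ₗ e.symm.toLinearMap = LinearMap.id := by
        apply LinearMap.ext; intro x
        exact e.apply_symm_apply x
      rw [h2, LinearMap.toMatrix_id]
    · rw [hP, ← LinearMap.toMatrix_comp b b.dualBasis b]
      have h2 : e.symm.toLinearMap ∘ₗ B = LinearMap.id := by
        apply LinearMap.ext; intro x
        exact e.symm_apply_apply x
      rw [h2, LinearMap.toMatrix_id]
  have hA : LinearMap.toMatrix b b A.mulVecLin = A := by
    rw [LinearMap.toMatrix_eq_toMatrix', ← Matrix.toLin'_apply', LinearMap.toMatrix'_toLin']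
  have hdual : LinearMap.toMatrix b.dualBasis b.dualBasis (A.mulVecLin).dualMap
      = A.transpose := by
    ext i j
    rw [LinearMap.toMatrix_apply, Basis.dualBasis_repr, LinearMap.dualMap_apply,
      Basis.dualBasis_apply, Matrix.transpose_apply]
    conv_rhs => rw [← hA]
    rw [LinearMap.toMatrix_apply]
  have key : P * A = A.transpose * P := by
    have h3 : LinearMap.toMatrix b b.dualBasis (B ∘ₗ A.mulVecLin)
        = LinearMap.toMatrix b b.dualBasis ((A.mulVecLin).dualMap ∘ₗ B) := by rw [hcomm]
    rw [LinearMap.toMatrix_comp b b b.dualBasis, hA,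
      LinearMap.toMatrix_comp b b.dualBasis b.dualBasis, hdual] at h3
    exact h3
  have hdet : IsUnit P.det := (Matrix.isUnit_iff_isUnit_det P).mp hPunit
  have h1 : P⁻¹⁻¹ = P := Matrix.nonsing_inv_nonsing_inv P hdet
  refine ⟨P⁻¹, ?_, ?_⟩
  · exact isUnit_iff_exists.mpr ⟨P, Matrix.nonsing_inv_mul P hdet, Matrix.mul_nonsing_inv P hdet⟩
  · rw [h1, Matrix.mul_assoc, ← Matrix.mul_assoc P A, key, Matrix.mul_assoc,
      Matrix.mul_nonsing_inv P hdet, Matrix.mul_one]
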